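/- arXiv:2512.24270 — 2 statements merged into one kernel-verified Lean document; each statement's English description precedes it below -/
import Mathlib

section
/- Let A be an N×N real matrix with nonnegative entries, β ≥ 0 with β · max_i ∑_j A_{ij} < 1, and fix c ≥ 0. Then there exists a unique subset S* of {0,…,N−1} that is c-stable (i.e. (I − β A[S*])^{-1} 𝟙_{S*} ≥ c 𝟙_{S*} entrywise, vacuously if S* is empty) and contains every c-stable subset: for every S with (I − β A[S])^{-1} 𝟙_S ≥ c 𝟙_S entrywise, S ⊆ S*. -/
open Matrix

/-- Principal submatrix of `A` indexed by the subset `S`. -/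
def psub {N : ℕ} (A : Matrix (Fin N) (Fin N) ℝ) (S : Finset (Fin N)) :
    Matrix {i // i ∈ S} {i // i ∈ S} ℝ :=
  Matrix.of fun i j => A i.1 j.1

/-- Bonacich centrality vector `(I - β A[S])⁻¹ 𝟙_S` of the induced subnetwork on `S`. -/
noncomputable def bon {N : ℕ} (A : Matrix (Fin N) (Fin N) ℝ) (β : ℝ) (S : Finset (Fin N)) :
    {i // i ∈ S} → ℝ :=
  (1 - β • psub A S)⁻¹ *ᵥ fun _ => 1

/-- A subset `S` is `c`-stable if `(I - β A[S])⁻¹ 𝟙_S ≥ c 𝟙_S` entrywise. -/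
def IsStable {N : ℕ} (A : Matrix (Fin N) (Fin N) ℝ) (β c : ℝ) (S : Finset (Fin N)) : Prop :=
  ∀ i : {i // i ∈ S}, c ≤ bon A β S i

/-! ### Auxiliary development: the Neumann series of `(I - β A[S])⁻¹ 𝟙`. -/

/-- Entrywise Neumann-series terms `(β A[S])^k 𝟙_S`, extended by `0` outside `S`. -/
noncomputable def bseq {N : ℕ} (A : Matrix (Fin N) (Fin N) ℝ) (β : ℝ) (S : Finset (Fin N)) :
    ℕ → Fin N → ℝ
  | 0 => fun i => if i ∈ S then 1 else 0
  | (k+1) => fun i => if i ∈ S then ∑ j ∈ S, β * A i j * bseq A β S k j else 0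

lemma bseq_nonneg {N : ℕ} {A : Matrix (Fin N) (Fin N) ℝ} {β : ℝ}
    (hA : ∀ i j, 0 ≤ A i j) (hβ : 0 ≤ β) (S : Finset (Fin N)) :
    ∀ k i, 0 ≤ bseq A β S k i := by
  intro k
  induction k with
  | zero => intro i; simp only [bseq]; split <;> norm_num
  | succ k ih =>
    intro i; simp only [bseq]; split
    · exact Finset.sum_nonneg fun j _ => mul_nonneg (mul_nonneg hβ (hA i j)) (ih j)
    · exact le_refl 0

lemma bseq_mono {N : ℕ} {A : Matrix (Fin N) (Fin N) ℝ} {β : ℝ}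
    (hA : ∀ i j, 0 ≤ A i j) (hβ : 0 ≤ β) {S T : Finset (Fin N)} (hST : S ⊆ T) :
    ∀ k i, bseq A β S k i ≤ bseq A β T k i := by
  intro k
  induction k with
  | zero =>
    intro i; simp only [bseq]
    by_cases h : i ∈ S
    · simp [h, hST h]
    · rw [if_neg h]; split <;> norm_num
  | succ k ih =>
    intro i; simp only [bseq]
    by_cases h : i ∈ S
    · rw [if_pos h, if_pos (hST h)]
      calc ∑ j ∈ S, β * A i j * bseq A β S k j
          ≤ ∑ j ∈ S, β * A i j * bseq A β T k j := by
            exact Finset.sum_le_sum fun j _ =>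
              mul_le_mul_of_nonneg_left (ih j) (mul_nonneg hβ (hA i j))
        _ ≤ ∑ j ∈ T, β * A i j * bseq A β T k j := by
            exact Finset.sum_le_sum_of_subset_of_nonneg hST fun j _ _ =>
              mul_nonneg (mul_nonneg hβ (hA i j)) (bseq_nonneg hA hβ T k j)
    · rw [if_neg h]
      split
      · exact Finset.sum_nonneg fun j _ =>
          mul_nonneg (mul_nonneg hβ (hA i j)) (bseq_nonneg hA hβ T k j)
      · exact le_refl 0

/-- The uniform row-sum bound. -/
noncomputable def rbnd {N : ℕ} (A : Matrix (Fin N) (Fin N) ℝ) (β : ℝ) (i₀ : Fin N) : ℝ :=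
  Finset.univ.sup' ⟨i₀, Finset.mem_univ i₀⟩ (fun i => β * ∑ j, A i j)

lemma rbnd_nonneg {N : ℕ} {A : Matrix (Fin N) (Fin N) ℝ} {β : ℝ}
    (hA : ∀ i j, 0 ≤ A i j) (hβ : 0 ≤ β) (i₀ : Fin N) : 0 ≤ rbnd A β i₀ := by
  unfold rbnd
  refine le_trans (mul_nonneg hβ (Finset.sum_nonneg fun j _ => hA i₀ j))
    (Finset.le_sup' (fun i => β * ∑ j, A i j) (Finset.mem_univ i₀))

lemma rbnd_lt_one {N : ℕ} {A : Matrix (Fin N) (Fin N) ℝ} {β : ℝ}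
    (hrow : ∀ i, β * ∑ j, A i j < 1) (i₀ : Fin N) : rbnd A β i₀ < 1 :=
  (Finset.sup'_lt_iff _).2 fun i _ => hrow i

lemma bseq_le {N : ℕ} {A : Matrix (Fin N) (Fin N) ℝ} {β : ℝ}
    (hA : ∀ i j, 0 ≤ A i j) (hβ : 0 ≤ β) (S : Finset (Fin N)) (i₀ : Fin N) :
    ∀ k i, bseq A β S k i ≤ (rbnd A β i₀) ^ k := by
  intro k
  induction k with
  | zero => intro i; simp only [bseq, pow_zero]; split <;> norm_num
  | succ k ih =>
    intro i
    have hr0 : 0 ≤ rbnd A β i₀ := rbnd_nonneg hA hβ i₀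
    simp only [bseq]
    split
    · calc ∑ j ∈ S, β * A i j * bseq A β S k j
          ≤ ∑ j ∈ S, β * A i j * (rbnd A β i₀) ^ k :=
            Finset.sum_le_sum fun j _ =>
              mul_le_mul_of_nonneg_left (ih j) (mul_nonneg hβ (hA i j))
        _ = (∑ j ∈ S, β * A i j) * (rbnd A β i₀) ^ k := by rw [Finset.sum_mul]
        _ ≤ (β * ∑ j, A i j) * (rbnd A β i₀) ^ k := by
            apply mul_le_mul_of_nonneg_right _ (pow_nonneg hr0 k)
            rw [Finset.mul_sum]
            exact Finset.sum_le_sum_of_subset_of_nonneg (Finset.subset_univ S)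
              fun j _ _ => mul_nonneg hβ (hA i j)
        _ ≤ (rbnd A β i₀) * (rbnd A β i₀) ^ k :=
            mul_le_mul_of_nonneg_right
              (by unfold rbnd
                  exact Finset.le_sup' (fun i => β * ∑ j, A i j) (Finset.mem_univ i))
              (pow_nonneg hr0 k)
        _ = (rbnd A β i₀) ^ (k+1) := (pow_succ' _ _).symm
    · exact pow_nonneg hr0 (k+1)

lemma bseq_summable {N : ℕ} {A : Matrix (Fin N) (Fin N) ℝ} {β : ℝ}
    (hA : ∀ i j, 0 ≤ A i j) (hβ : 0 ≤ β) (hrow : ∀ i, β * ∑ j, A i j < 1)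
    (S : Finset (Fin N)) (i : Fin N) :
    Summable (fun k => bseq A β S k i) :=
  Summable.of_nonneg_of_le (fun k => bseq_nonneg hA hβ S k i)
    (fun k => bseq_le hA hβ S i k i)
    (summable_geometric_of_lt_one (rbnd_nonneg hA hβ i) (rbnd_lt_one hrow i))

lemma pow_mulVec_eq {N : ℕ} (A : Matrix (Fin N) (Fin N) ℝ) (β : ℝ) (S : Finset (Fin N)) :
    ∀ k (i : {i // i ∈ S}),
      (((β • psub A S) ^ k) *ᵥ (fun _ => (1:ℝ))) i = bseq A β S k i.1 := by
  intro k
  induction k with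
  | zero => intro i; simp [bseq, i.2]
  | succ k ih =>
    intro i
    rw [pow_succ', ← mulVec_mulVec]
    have ih' : ((β • psub A S) ^ k *ᵥ fun _ => (1:ℝ)) = fun j => bseq A β S k j.1 :=
      funext ih
    rw [ih']
    have h1 : ((β • psub A S) *ᵥ fun j : {i // i ∈ S} => bseq A β S k j.1) i
        = ∑ j : {i // i ∈ S}, (β * A i.1 j.1) * bseq A β S k j.1 := by
      simp [mulVec, dotProduct, psub, mul_assoc]
    rw [h1]
    have h2 : ∑ j : {i // i ∈ S}, (β * A i.1 j.1) * bseq A β S k j.1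
        = ∑ j ∈ S, β * A i.1 j * bseq A β S k j :=
      (Finset.sum_subtype S (fun x => Iff.rfl) (fun j => β * A i.1 j * bseq A β S k j)).symm
    rw [h2]
    simp [bseq, i.2]

lemma isUnit_one_sub_smul {N : ℕ} {A : Matrix (Fin N) (Fin N) ℝ} {β : ℝ}
    (hA : ∀ i j, 0 ≤ A i j) (hβ : 0 ≤ β) (hrow : ∀ i, β * ∑ j, A i j < 1)
    (S : Finset (Fin N)) :
    IsUnit (1 - β • psub A S) := by
  rw [← Matrix.mulVec_injective_iff_isUnit]
  have key : ∀ v : {i // i ∈ S} → ℝ, (1 - β • psub A S) *ᵥ v = 0 → v = 0 := by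
    intro v hv
    have hvM : v = (β • psub A S) *ᵥ v := by
      have := hv
      rw [sub_mulVec, one_mulVec, sub_eq_zero] at this
      exact this
    by_cases hne : Nonempty {i // i ∈ S}
    · obtain ⟨i₀, -, hmax⟩ := Finset.exists_max_image Finset.univ (fun j => |v j|)
        (Finset.univ_nonempty)
      have hrowS : ∑ j : {i // i ∈ S}, β * A i₀.1 j.1 < 1 := by
        calc ∑ j : {i // i ∈ S}, β * A i₀.1 j.1
            = ∑ j ∈ S, β * A i₀.1 j :=
              (Finset.sum_subtype S (fun x => Iff.rfl) (fun j => β * A i₀.1 j)).symm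
          _ ≤ ∑ j, β * A i₀.1 j := Finset.sum_le_sum_of_subset_of_nonneg
              (Finset.subset_univ S) (fun j _ _ => mul_nonneg hβ (hA _ j))
          _ = β * ∑ j, A i₀.1 j := by rw [Finset.mul_sum]
          _ < 1 := hrow i₀.1
      have hb : |v i₀| ≤ (∑ j : {i // i ∈ S}, β * A i₀.1 j.1) * |v i₀| := by
        calc |v i₀| = |((β • psub A S) *ᵥ v) i₀| := by rw [← hvM]
          _ = |∑ j : {i // i ∈ S}, (β * A i₀.1 j.1) * v j| := by
              simp only [mulVec, dotProduct, Matrix.smul_apply, psub, of_apply, smul_eq_mul]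
          _ ≤ ∑ j : {i // i ∈ S}, |(β * A i₀.1 j.1) * v j| := Finset.abs_sum_le_sum_abs _ _
          _ = ∑ j : {i // i ∈ S}, (β * A i₀.1 j.1) * |v j| := by
              refine Finset.sum_congr rfl fun j _ => ?_
              rw [abs_mul, abs_of_nonneg (mul_nonneg hβ (hA _ _))]
          _ ≤ ∑ j : {i // i ∈ S}, (β * A i₀.1 j.1) * |v i₀| :=
              Finset.sum_le_sum fun j _ => mul_le_mul_of_nonneg_left
                (hmax j (Finset.mem_univ j)) (mul_nonneg hβ (hA _ _))
          _ = (∑ j : {i // i ∈ S}, β * A i₀.1 j.1) * |v i₀| := by rw [Finset.sum_mul]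
      have hv0 : |v i₀| = 0 := by nlinarith [abs_nonneg (v i₀)]
      funext j
      have := hmax j (Finset.mem_univ j)
      rw [hv0] at this
      exact abs_eq_zero.1 (le_antisymm this (abs_nonneg _))
    · funext j; exact absurd ⟨j⟩ hne
  intro u w huw
  have h0 : (1 - β • psub A S) *ᵥ (u - w) = 0 := by
    rw [mulVec_sub, huw, sub_self]
  exact sub_eq_zero.1 (key _ h0)

set_option maxHeartbeats 1000000 in
lemma bon_eq {N : ℕ} {A : Matrix (Fin N) (Fin N) ℝ} {β : ℝ}
    (hA : ∀ i j, 0 ≤ A i j) (hβ : 0 ≤ β) (hrow : ∀ i, β * ∑ j, A i j < 1)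
    (S : Finset (Fin N)) (i : {i // i ∈ S}) :
    bon A β S i = ∑' k, bseq A β S k i.1 := by
  set M := β • psub A S with hM
  set x : {i // i ∈ S} → ℝ := fun j => ∑' k, bseq A β S k j.1 with hxdef
  have hsum : ∀ j : Fin N, Summable (fun k => bseq A β S k j) :=
    fun j => bseq_summable hA hβ hrow S j
  have hMx : ∀ i : {i // i ∈ S}, (M *ᵥ x) i = ∑' k, bseq A β S (k+1) i.1 := by
    intro i
    have e1 : (M *ᵥ x) i = ∑ j : {i // i ∈ S}, (β * A i.1 j.1) * ∑' k, bseq A β S k j.1 := by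
      simp [hM, mulVec, dotProduct, psub, hxdef, mul_assoc]
    rw [e1]
    have e2 : ∀ j : {i // i ∈ S},
        (β * A i.1 j.1) * ∑' k, bseq A β S k j.1
          = ∑' k, (β * A i.1 j.1) * bseq A β S k j.1 :=
      fun j => (tsum_mul_left).symm
    rw [Finset.sum_congr rfl fun j _ => e2 j]
    rw [← Summable.tsum_finsetSum (fun j _ => (hsum j.1).mul_left _)]
    refine tsum_congr fun k => ?_
    have e3 : ∑ j : {i // i ∈ S}, (β * A i.1 j.1) * bseq A β S k j.1
        = ∑ j ∈ S, β * A i.1 j * bseq A β S k j :=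
      (Finset.sum_subtype S (fun x => Iff.rfl) (fun j => β * A i.1 j * bseq A β S k j)).symm
    rw [e3]
    simp [bseq, i.2]
  have hx : (1 - M) *ᵥ x = fun _ => (1:ℝ) := by
    funext i
    rw [sub_mulVec, one_mulVec]
    have : x i = 1 + ∑' k, bseq A β S (k+1) i.1 := by
      rw [hxdef]
      have := Summable.tsum_eq_zero_add (hsum i.1)
      simpa [bseq, i.2] using this
    simp [Pi.sub_apply, this, hMx i]
  have hU : IsUnit (1 - M) := isUnit_one_sub_smul hA hβ hrow S
  have hdet : IsUnit (1 - M).det := (Matrix.isUnit_iff_isUnit_det _).1 hU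
  have : bon A β S = x := by
    unfold bon
    rw [← hM, ← hx, mulVec_mulVec, Matrix.nonsing_inv_mul _ hdet, one_mulVec]
  rw [this]

lemma bon_mono {N : ℕ} {A : Matrix (Fin N) (Fin N) ℝ} {β : ℝ}
    (hA : ∀ i j, 0 ≤ A i j) (hβ : 0 ≤ β) (hrow : ∀ i, β * ∑ j, A i j < 1)
    {S T : Finset (Fin N)} (hST : S ⊆ T) (i : Fin N) (hiS : i ∈ S) :
    bon A β S ⟨i, hiS⟩ ≤ bon A β T ⟨i, hST hiS⟩ := by
  rw [bon_eq hA hβ hrow, bon_eq hA hβ hrow]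
  exact Summable.tsum_le_tsum (fun k => bseq_mono hA hβ hST k i)
    (bseq_summable hA hβ hrow S i) (bseq_summable hA hβ hrow T i)

/-- There is a unique `c`-stable subset containing every `c`-stable subset. -/
theorem exists_unique_maximal_stable {N : ℕ} (A : Matrix (Fin N) (Fin N) ℝ) (β : ℝ)
    (hA : ∀ i j, 0 ≤ A i j) (hβ : 0 ≤ β) (hrow : ∀ i, β * ∑ j, A i j < 1)
    (c : ℝ) (hc : 0 ≤ c) :
    ∃! Sstar : Finset (Fin N),
      IsStable A β c Sstar ∧ ∀ S : Finset (Fin N), IsStable A β c S → S ⊆ Sstar := by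
  classical
  set Sstar : Finset (Fin N) :=
    Finset.univ.filter (fun i => ∃ S : Finset (Fin N), IsStable A β c S ∧ i ∈ S) with hSdef
  have hmax : ∀ S : Finset (Fin N), IsStable A β c S → S ⊆ Sstar := by
    intro S hS j hj
    rw [hSdef, Finset.mem_filter]
    exact ⟨Finset.mem_univ j, S, hS, hj⟩
  have hstable : IsStable A β c Sstar := by
    intro i
    obtain ⟨-, S, hS, hiS⟩ := Finset.mem_filter.1 i.2
    calc c ≤ bon A β S ⟨i.1, hiS⟩ := hS ⟨i.1, hiS⟩
      _ ≤ bon A β Sstar ⟨i.1, (hmax S hS) hiS⟩ := bon_mono hA hβ hrow (hmax S hS) i.1 hiS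
      _ = bon A β Sstar i := rfl
  refine ⟨Sstar, ⟨hstable, hmax⟩, ?_⟩
  rintro T ⟨hT1, hT2⟩
  exact Finset.Subset.antisymm (hmax T hT1) (hT2 Sstar hstable)
end

section
/- Let A be an N×N real matrix with nonnegative entries and β ≥ 0 with β · max_i ∑_j A_{ij} < 1. Let b = (I − β A)^{-1} 𝟙, b̲ = min_i b_i, P = {i : b_i = b̲}, R = {i : b_i > b̲}, and for i ∈ R let d^R_i = ∑_{j ∈ P} A_{ij}; set q = β b̲ (I − β A_{RR})^{-1} d^R. If q_i ≥ b_i − b̲ for all i ∈ R, then for every nonempty subset S of {0,…,N−1}, min_{i ∈ S} [(I − β A[S])^{-1} 𝟙_S]_i ≤ b̲; that is, every induced subnetwork contains a node whose Bonacich centrality does not exceed the original minimum, so the entire network is abandoned in a global cascade once the outside option exceeds the utility corresponding to b̲. -/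
open Matrix
open scoped NNReal

attribute [local instance] Matrix.linftyOpNormedRing Matrix.linftyOpNormedAlgebra

variable {n : Type*} [Fintype n] [DecidableEq n]

lemma entry_le_norm (B : Matrix n n ℝ) (i j : n) : ‖B i j‖ ≤ ‖B‖ := by
  have h1 : ‖B i j‖₊ ≤ ‖B‖₊ := by
    rw [Matrix.linfty_opNNNorm_def]
    exact le_trans (Finset.single_le_sum (f := fun k => ‖B i k‖₊) (fun _ _ => zero_le)
      (Finset.mem_univ j)) (Finset.le_sup (f := fun i => ∑ j, ‖B i j‖₊) (Finset.mem_univ i))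
  exact_mod_cast h1

lemma norm_lt_one_of_rows (B : Matrix n n ℝ) (h : ∀ i, ∑ j, ‖B i j‖ < 1) : ‖B‖ < 1 := by
  have h1 : ‖B‖₊ < 1 := by
    rw [Matrix.linfty_opNNNorm_def]
    rw [Finset.sup_lt_iff (show (⊥:ℝ≥0) < 1 from zero_lt_one)]
    intro i _
    rw [← NNReal.coe_lt_coe]
    push_cast
    simpa using h i
  exact_mod_cast h1

lemma pow_entry_nonneg (B : Matrix n n ℝ) (hB : ∀ i j, 0 ≤ B i j) (k : ℕ) :
    ∀ i j, 0 ≤ (B ^ k) i j := by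
  induction k with
  | zero => intro i j; simp [Matrix.one_apply]; positivity
  | succ m ih =>
    intro i j
    rw [pow_succ, Matrix.mul_apply]
    exact Finset.sum_nonneg fun l _ => mul_nonneg (ih i l) (hB l j)

lemma inv_entry_nonneg (B : Matrix n n ℝ) (hB : ∀ i j, 0 ≤ B i j) (hn : ‖B‖ < 1) :
    ∀ i j, 0 ≤ (1 - B)⁻¹ i j := by
  intro i j
  rw [Matrix.nonsing_inv_eq_ringInverse]
  have h := hasSum_geom_series_inverse B hn
  let e : Matrix n n ℝ →ₗ[ℝ] ℝ := Matrix.entryLinearMap ℝ ℝ i j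
  have hcont : Continuous e :=
    (e.mkContinuous 1 (fun M => by simpa [e] using entry_le_norm M i j)).continuous
  have h2 : HasSum (fun k => (B ^ k) i j) (Ring.inverse (1 - B) i j) := by
    have := h.map e hcont
    exact this
  have h3 := tsum_nonneg (L := SummationFilter.unconditional ℕ) (fun k => pow_entry_nonneg B hB k i j)
  rwa [h2.tsum_eq] at h3

lemma one_sub_mulVec (B : Matrix n n ℝ) (v : n → ℝ) (i : n) :
    ((1 - B) *ᵥ v) i = v i - ∑ j, B i j * v j := by
  rw [Matrix.sub_mulVec, Matrix.one_mulVec]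
  rfl

lemma comparison (B : Matrix n n ℝ) (hB : ∀ i j, 0 ≤ B i j) (hn : ‖B‖ < 1)
    (u v : n → ℝ) (h : ∀ i, u i ≤ ((1 - B) *ᵥ v) i) :
    ∀ i, ((1 - B)⁻¹ *ᵥ u) i ≤ v i := by
  intro i
  have hdet : IsUnit (1 - B).det :=
    (Matrix.isUnit_iff_isUnit_det _).1 (isUnit_one_sub_of_norm_lt_one hn)
  have hinv := inv_entry_nonneg B hB hn
  have key : ((1 - B)⁻¹ *ᵥ u) i ≤ ((1 - B)⁻¹ *ᵥ ((1 - B) *ᵥ v)) i := by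
    simp only [Matrix.mulVec, dotProduct]
    exact Finset.sum_le_sum fun j _ => mul_le_mul_of_nonneg_left (h j) (hinv i j)
  rwa [Matrix.mulVec_mulVec, Matrix.nonsing_inv_mul _ hdet, Matrix.one_mulVec] at key

lemma inv_mulVec_eq (B : Matrix n n ℝ) (hn : ‖B‖ < 1) (u v : n → ℝ)
    (h : (1 - B) *ᵥ v = u) : (1 - B)⁻¹ *ᵥ u = v := by
  have hdet : IsUnit (1 - B).det :=
    (Matrix.isUnit_iff_isUnit_det _).1 (isUnit_one_sub_of_norm_lt_one hn)
  rw [← h, Matrix.mulVec_mulVec, Matrix.nonsing_inv_mul _ hdet, Matrix.one_mulVec]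


lemma psub_norm_lt_one {N : ℕ} (A : Matrix (Fin N) (Fin N) ℝ) (β : ℝ)
    (hA : ∀ i j, 0 ≤ A i j) (hβ : 0 ≤ β) (hrow : ∀ i, β * ∑ j, A i j < 1)
    (S : Finset (Fin N)) : ‖β • psub A S‖ < 1 := by
  apply norm_lt_one_of_rows
  intro i
  have h1 : ∀ j : {x // x ∈ S}, ‖(β • psub A S) i j‖ = β * A i.1 j.1 := by
    intro j
    rw [Matrix.smul_apply, smul_eq_mul]
    exact abs_of_nonneg (mul_nonneg hβ (hA i.1 j.1))
  calc ∑ j, ‖(β • psub A S) i j‖ = ∑ j : {x // x ∈ S}, β * A i.1 j.1 := by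
        exact Finset.sum_congr rfl fun j _ => h1 j
    _ = β * ∑ j ∈ S, A i.1 j := by
        rw [Finset.mul_sum, Finset.sum_coe_sort S (fun j => β * A i.1 j)]
    _ ≤ β * ∑ j, A i.1 j := by
        apply mul_le_mul_of_nonneg_left _ hβ
        exact Finset.sum_le_sum_of_subset_of_nonneg (Finset.subset_univ S)
          (fun j _ _ => hA i.1 j)
    _ < 1 := hrow i.1

lemma full_norm_lt_one {N : ℕ} (A : Matrix (Fin N) (Fin N) ℝ) (β : ℝ)
    (hA : ∀ i j, 0 ≤ A i j) (hβ : 0 ≤ β) (hrow : ∀ i, β * ∑ j, A i j < 1) :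
    ‖β • A‖ < 1 := by
  apply norm_lt_one_of_rows
  intro i
  calc ∑ j, ‖(β • A) i j‖ = ∑ j, β * A i j := by
        refine Finset.sum_congr rfl fun j _ => ?_
        rw [Matrix.smul_apply, smul_eq_mul]
        exact abs_of_nonneg (mul_nonneg hβ (hA i j))
    _ = β * ∑ j, A i j := (Finset.mul_sum _ _ _).symm
    _ < 1 := hrow i

lemma smul_entry_nonneg {N : ℕ} (A : Matrix (Fin N) (Fin N) ℝ) (β : ℝ)
    (hA : ∀ i j, 0 ≤ A i j) (hβ : 0 ≤ β) (S : Finset (Fin N)) :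
    ∀ i j, 0 ≤ (β • psub A S) i j := fun i j => mul_nonneg hβ (hA i.1 j.1)


/-- Global cascade condition: if `q_i ≥ b_i - b̲` for all rich nodes `i ∈ R`, then
every nonempty induced subnetwork contains a node whose Bonacich centrality does
not exceed the original minimum `b̲`, so the whole network is abandoned. -/
theorem global_collapse {N : ℕ} (A : Matrix (Fin N) (Fin N) ℝ) (β : ℝ)
    (hA : ∀ i j, 0 ≤ A i j) (hβ : 0 ≤ β) (hrow : ∀ i, β * ∑ j, A i j < 1)
    (b : Fin N → ℝ) (hb : b = (1 - β • A)⁻¹ *ᵥ fun _ => 1)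
    (bmin : ℝ) (hmin_le : ∀ i, bmin ≤ b i) (hmin_attained : ∃ i, b i = bmin)
    (P R : Finset (Fin N))
    (hP : P = Finset.univ.filter fun i => b i = bmin)
    (hR : R = Finset.univ.filter fun i => bmin < b i)
    (dR : {i // i ∈ R} → ℝ) (hdR : dR = fun i => ∑ j ∈ P, A i.1 j)
    (q : {i // i ∈ R} → ℝ)
    (hq : q = (β * bmin) • ((1 - β • psub A R)⁻¹ *ᵥ dR))
    (hcond : ∀ i : {i // i ∈ R}, b i.1 - bmin ≤ q i) :
    ∀ S : Finset (Fin N), S.Nonempty →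
      ∃ i : {i // i ∈ S}, bon A β S i ≤ bmin := by
  -- membership characterizations
  have hmemR : ∀ i, i ∈ R ↔ bmin < b i := by
    intro i; rw [hR]; simp
  have hmemP : ∀ i, i ∈ P ↔ b i = bmin := by
    intro i; rw [hP]; simp
  have hnotR : ∀ i, i ∉ R → b i = bmin := by
    intro i hi
    rw [hmemR] at hi
    exact le_antisymm (not_lt.1 hi) (hmin_le i)
  -- the equation for b
  have hbeq : ∀ i, b i = 1 + β * ∑ j, A i j * b j := by
    have hnA := full_norm_lt_one A β hA hβ hrow
    have hdet : IsUnit (1 - β • A).det :=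
      (Matrix.isUnit_iff_isUnit_det _).1 (isUnit_one_sub_of_norm_lt_one hnA)
    have h1 : (1 - β • A) *ᵥ b = fun _ => 1 := by
      rw [hb, Matrix.mulVec_mulVec, Matrix.mul_nonsing_inv _ hdet, Matrix.one_mulVec]
    intro i
    have h2 := congrFun h1 i
    rw [one_sub_mulVec] at h2
    have h3 : ∑ j, (β • A) i j * b j = β * ∑ j, A i j * b j := by
      rw [Finset.mul_sum]
      exact Finset.sum_congr rfl fun j _ => by rw [Matrix.smul_apply, smul_eq_mul, mul_assoc]
    rw [h3] at h2
    linarith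
  -- positivity of bmin
  have hbmin_pos : 0 < bmin := by
    obtain ⟨i0, hi0⟩ := hmin_attained
    have h1 := hbeq i0
    rw [hi0] at h1
    have h2 : ∑ j, A i0 j * bmin ≤ ∑ j, A i0 j * b j :=
      Finset.sum_le_sum fun j _ => mul_le_mul_of_nonneg_left (hmin_le j) (hA i0 j)
    have h3 : ∑ j, A i0 j * bmin = (∑ j, A i0 j) * bmin := by
      rw [Finset.sum_mul]
    have h4 := hrow i0
    nlinarith [mul_le_mul_of_nonneg_left h2 hβ]
  have hbnn : ∀ j, 0 ≤ b j := fun j => le_trans hbmin_pos.le (hmin_le j)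
  -- sum splitting over P and R
  have hsplit : ∀ f : Fin N → ℝ, ∑ j, f j = ∑ j ∈ P, f j + ∑ j ∈ R, f j := by
    intro f
    have h1 : Finset.univ.filter (fun i => ¬ (b i = bmin)) = R := by
      rw [hR]
      apply Finset.filter_congr
      intro i _
      constructor
      · intro h; exact lt_of_le_of_ne (hmin_le i) (Ne.symm h)
      · intro h; exact ne_of_gt h
    rw [← Finset.sum_filter_add_sum_filter_not Finset.univ (fun i => b i = bmin) f, ← hP, h1]
  -- the equation for q
  have hqeq : ∀ i : {x // x ∈ R},
      q i = β * bmin * dR i + β * ∑ j : {x // x ∈ R}, A i.1 j.1 * q j := by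
    have hnR := psub_norm_lt_one A β hA hβ hrow R
    have hdet : IsUnit (1 - β • psub A R).det :=
      (Matrix.isUnit_iff_isUnit_det _).1 (isUnit_one_sub_of_norm_lt_one hnR)
    have h1 : (1 - β • psub A R) *ᵥ q = (β * bmin) • dR := by
      rw [hq, ← Matrix.mulVec_smul, Matrix.mulVec_mulVec, Matrix.mul_nonsing_inv _ hdet,
        Matrix.one_mulVec]
    intro i
    have h2 := congrFun h1 i
    rw [one_sub_mulVec] at h2
    have h3 : ∑ j, (β • psub A R) i j * q j = β * ∑ j : {x // x ∈ R}, A i.1 j.1 * q j := by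
      rw [Finset.mul_sum]
      exact Finset.sum_congr rfl fun j _ => by
        rw [Matrix.smul_apply, smul_eq_mul, mul_assoc]; rfl
    rw [h3] at h2
    have h4 : ((β * bmin) • dR) i = β * bmin * dR i := rfl
    rw [h4] at h2
    linarith
  -- the vector w
  set w : Fin N → ℝ := fun i => if h : i ∈ R then b i - q ⟨i, h⟩ else bmin with hw
  have hwle : ∀ i, w i ≤ bmin := by
    intro i
    rw [hw]
    by_cases h : i ∈ R
    · simp only [dif_pos h]
      have := hcond ⟨i, h⟩
      linarith
    · simp only [dif_neg h]; exact le_rfl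
  have hwR : ∀ i : {x // x ∈ R},
      w i.1 = 1 + β * ∑ j : {x // x ∈ R}, A i.1 j.1 * w j.1 := by
    intro i
    have hwval : ∀ j : {x // x ∈ R}, w j.1 = b j.1 - q j := by
      intro j; rw [hw]; simp only [dif_pos j.2]
    have hb1 : b i.1 = 1 + β * (∑ j ∈ P, A i.1 j * bmin + ∑ j ∈ R, A i.1 j * b j) := by
      have hPsum : ∑ j ∈ P, A i.1 j * b j = ∑ j ∈ P, A i.1 j * bmin :=
        Finset.sum_congr rfl fun j hj => by rw [(hmemP j).1 hj]
      rw [hbeq i.1, hsplit (fun j => A i.1 j * b j), hPsum]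
    have hq1 : q i = β * bmin * ∑ j ∈ P, A i.1 j
        + β * ∑ j : {x // x ∈ R}, A i.1 j.1 * q j := by
      rw [hqeq i, hdR]
    have hsum1 : ∑ j ∈ R, A i.1 j * b j = ∑ j : {x // x ∈ R}, A i.1 j.1 * b j.1 :=
      (Finset.sum_coe_sort R (fun j => A i.1 j * b j)).symm
    have hsum2 : ∑ j ∈ P, A i.1 j * bmin = bmin * ∑ j ∈ P, A i.1 j := by
      rw [Finset.mul_sum]
      exact Finset.sum_congr rfl fun j _ => mul_comm _ _
    rw [hwval i, hb1, hq1, hsum1]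
    have : ∑ j : {x // x ∈ R}, A i.1 j.1 * w j.1
        = ∑ j : {x // x ∈ R}, (A i.1 j.1 * b j.1 - A i.1 j.1 * q j) := by
      exact Finset.sum_congr rfl fun j _ => by rw [hwval j]; ring
    rw [this, Finset.sum_sub_distrib]
    rw [hsum2]
    ring
  -- nonnegativity of w
  have hwRnn : ∀ i : {x // x ∈ R}, 0 ≤ w i.1 := by
    have hnR := psub_norm_lt_one A β hA hβ hrow R
    have h1 : (1 - β • psub A R) *ᵥ (fun j : {x // x ∈ R} => w j.1) = fun _ => 1 := by
      funext i
      rw [one_sub_mulVec]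
      have h2 : ∑ j, (β • psub A R) i j * w j.1
          = β * ∑ j : {x // x ∈ R}, A i.1 j.1 * w j.1 := by
        rw [Finset.mul_sum]
        exact Finset.sum_congr rfl fun j _ => by
          rw [Matrix.smul_apply, smul_eq_mul, mul_assoc]; rfl
      rw [h2]
      have := hwR i
      linarith
    have h3 := inv_mulVec_eq _ hnR _ _ h1
    intro i
    have h4 := congrFun h3 i
    rw [← h4]
    simp only [Matrix.mulVec, dotProduct, mul_one]
    exact Finset.sum_nonneg fun j _ =>
      inv_entry_nonneg _ (smul_entry_nonneg A β hA hβ R) hnR i j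
  have hwnn : ∀ i, 0 ≤ w i := by
    intro i
    by_cases h : i ∈ R
    · exact hwRnn ⟨i, h⟩
    · rw [hw]; simp only [dif_neg h]; exact hbmin_pos.le
  -- main argument
  intro S hS
  have hnS := psub_norm_lt_one A β hA hβ hrow S
  have hBS := smul_entry_nonneg A β hA hβ S
  by_cases hc : ∃ i0 ∈ S, b i0 = bmin
  · -- S contains a poor node: use v = b restricted to S
    obtain ⟨i0, hi0S, hi0⟩ := hc
    have feas : ∀ i : {x // x ∈ S},
        (fun _ : {x // x ∈ S} => (1:ℝ)) i ≤ ((1 - β • psub A S) *ᵥ fun j => b j.1) i := by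
      intro i
      rw [one_sub_mulVec]
      have h2 : ∑ j, (β • psub A S) i j * b j.1 = β * ∑ j ∈ S, A i.1 j * b j := by
        rw [← Finset.sum_coe_sort S (fun j => A i.1 j * b j), Finset.mul_sum]
        exact Finset.sum_congr rfl fun j _ => by
          rw [Matrix.smul_apply, smul_eq_mul, mul_assoc]; rfl
      rw [h2]
      have h3 : ∑ j ∈ S, A i.1 j * b j ≤ ∑ j, A i.1 j * b j :=
        Finset.sum_le_sum_of_subset_of_nonneg (Finset.subset_univ S)
          (fun j _ _ => mul_nonneg (hA i.1 j) (hbnn j))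
      have h4 := hbeq i.1
      have h5 := mul_le_mul_of_nonneg_left h3 hβ
      simp only []
      linarith
    have hcomp := comparison _ hBS hnS _ _ feas ⟨i0, hi0S⟩
    exact ⟨⟨i0, hi0S⟩, by rw [bon]; calc _ ≤ b i0 := hcomp
                          _ = bmin := hi0⟩
  · -- S is contained in R: use v = w restricted to S
    push_neg at hc
    have hSR : ∀ i ∈ S, i ∈ R := by
      intro i hi
      rw [hmemR]
      exact lt_of_le_of_ne (hmin_le i) (Ne.symm (hc i hi))
    have feas : ∀ i : {x // x ∈ S},
        (fun _ : {x // x ∈ S} => (1:ℝ)) i ≤ ((1 - β • psub A S) *ᵥ fun j => w j.1) i := by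
      intro i
      rw [one_sub_mulVec]
      have h2 : ∑ j, (β • psub A S) i j * w j.1 = β * ∑ j ∈ S, A i.1 j * w j := by
        rw [← Finset.sum_coe_sort S (fun j => A i.1 j * w j), Finset.mul_sum]
        exact Finset.sum_congr rfl fun j _ => by
          rw [Matrix.smul_apply, smul_eq_mul, mul_assoc]; rfl
      rw [h2]
      have h3 : ∑ j ∈ S, A i.1 j * w j ≤ ∑ j ∈ R, A i.1 j * w j :=
        Finset.sum_le_sum_of_subset_of_nonneg (fun j hj => hSR j hj)
          (fun j _ _ => mul_nonneg (hA i.1 j) (hwnn j))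
      have h4 := hwR ⟨i.1, hSR i.1 i.2⟩
      have h5 : ∑ j : {x // x ∈ R}, A i.1 j.1 * w j.1 = ∑ j ∈ R, A i.1 j * w j :=
        Finset.sum_coe_sort R (fun j => A i.1 j * w j)
      rw [h5] at h4
      have h6 := mul_le_mul_of_nonneg_left h3 hβ
      simp only []
      linarith
    have hcomp := comparison _ hBS hnS _ _ feas
    obtain ⟨i0, hi0⟩ := hS
    exact ⟨⟨i0, hi0⟩, by rw [bon]; calc _ ≤ w i0 := hcomp ⟨i0, hi0⟩
                          _ ≤ bmin := hwle i0⟩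
end
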